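/- Let T = S¹ × S¹ ⊂ ℝ⁴ be the standard torus. For every positive integer n and every pair of n-tuples (P₁, …, Pₙ) and (Q₁, …, Qₙ) of pairwise distinct points of T, there exists a birational diffeomorphism φ of T such that φ(Pⱼ) = Qⱼ for every j = 1, …, n. In other words, the group of birational diffeomorphisms of the torus acts infinitely transitively on T. -/

import Mathlib

/-- The standard torus `T = S¹ × S¹ ⊂ ℝ⁴`, viewed inside euclidean `ℝ⁴`. -/
def stdTorus : Set (EuclideanSpace ℝ (Fin 4)) :=
  {x | x 0 ^ 2 + x 1 ^ 2 = 1 ∧ x 2 ^ 2 + x 3 ^ 2 = 1}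

/-- `φ` is given on `T` by polynomial fractions `Fᵢ/G` in the ambient coordinates,
where the denominator `G` vanishes at no point of `T`. -/
def HasRegularRep (φ : EuclideanSpace ℝ (Fin 4) → EuclideanSpace ℝ (Fin 4)) : Prop :=
  ∃ (F : Fin 4 → MvPolynomial (Fin 4) ℝ) (G : MvPolynomial (Fin 4) ℝ),
    (∀ x ∈ stdTorus, MvPolynomial.eval (fun i => x i) G ≠ 0) ∧
    ∀ x ∈ stdTorus, ∀ i, φ x i =
      MvPolynomial.eval (fun i => x i) (F i) / MvPolynomial.eval (fun i => x i) G

/-- A birational diffeomorphism of `T`: a bijection of `T` onto itself given on `T` by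
polynomial fractions with nonvanishing denominator, whose inverse bijection admits a
representation of the same form. -/
def IsBirationalDiffeo (φ : EuclideanSpace ℝ (Fin 4) → EuclideanSpace ℝ (Fin 4)) : Prop :=
  Set.BijOn φ stdTorus stdTorus ∧ HasRegularRep φ ∧
    ∃ ψ : EuclideanSpace ℝ (Fin 4) → EuclideanSpace ℝ (Fin 4),
      Set.InvOn ψ φ stdTorus stdTorus ∧ HasRegularRep ψ

open MvPolynomial

lemma exists_pow_mul_eval (F : Fin 4 → MvPolynomial (Fin 4) ℝ) (G : MvPolynomial (Fin 4) ℝ)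
    (H : MvPolynomial (Fin 4) ℝ) :
    ∃ (P : MvPolynomial (Fin 4) ℝ) (N : ℕ), ∀ x : Fin 4 → ℝ, eval x G ≠ 0 →
      eval (fun k => eval x (F k) / eval x G) H * (eval x G) ^ N = eval x P := by
  induction H using MvPolynomial.induction_on with
  | C a => exact ⟨C a, 0, fun x _ => by simp⟩
  | add p q hp hq =>
    obtain ⟨P₁, N₁, h₁⟩ := hp
    obtain ⟨P₂, N₂, h₂⟩ := hq
    refine ⟨P₁ * G ^ N₂ + P₂ * G ^ N₁, N₁ + N₂, fun x hx => ?_⟩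
    have e₁ := h₁ x hx; have e₂ := h₂ x hx
    simp only [map_add, map_mul, map_pow]
    rw [← e₁, ← e₂]; ring
  | mul_X p k hp =>
    obtain ⟨P₁, N₁, h₁⟩ := hp
    refine ⟨P₁ * F k, N₁ + 1, fun x hx => ?_⟩
    have e₁ := h₁ x hx
    simp only [map_mul, eval_X]
    rw [← e₁]
    field_simp
    ring

lemma HasRegularRep.comp {φ ψ : EuclideanSpace ℝ (Fin 4) → EuclideanSpace ℝ (Fin 4)}
    (hmap : Set.MapsTo φ stdTorus stdTorus)
    (hφ : HasRegularRep φ) (hψ : HasRegularRep ψ) : HasRegularRep (ψ ∘ φ) := by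
  obtain ⟨F, G, hG, hF⟩ := hφ
  obtain ⟨F', G', hG', hF'⟩ := hψ
  choose P N hPN using fun H => exists_pow_mul_eval F G H
  obtain ⟨S, D, hD⟩ : ∃ (S : ℕ) (D : Fin 4 → ℕ), ∀ i, N (F' i) + D i = S :=
    ⟨Finset.univ.sup (fun i => N (F' i)), fun i => Finset.univ.sup (fun i => N (F' i)) - N (F' i),
      fun i => Nat.add_sub_cancel' (Finset.le_sup (f := fun i => N (F' i)) (Finset.mem_univ i))⟩
  have key : ∀ x ∈ stdTorus,
      eval (fun i => x i) (P G') =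
        eval (fun i => φ x i) G' * (eval (fun i => x i) G) ^ (N G') ∧
      ∀ i, eval (fun i => x i) (P (F' i)) =
        eval (fun i => φ x i) (F' i) * (eval (fun i => x i) G) ^ (N (F' i)) := by
    intro x hx
    have hGx : eval (fun i => x i) G ≠ 0 := hG x hx
    have hφx : (fun k => φ x k) = fun k => eval (fun i => x i) (F k) / eval (fun i => x i) G :=
      funext fun k => hF x hx k
    constructor
    · rw [← hPN G' (fun i => x i) hGx, hφx]
    · intro i; rw [← hPN (F' i) (fun i => x i) hGx, hφx]
  refine ⟨fun i => P (F' i) * G ^ (D i + N G'),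
          P G' * G ^ S, fun x hx => ?_, fun x hx i => ?_⟩
  · have hx' : φ x ∈ stdTorus := hmap hx
    have hGx : eval (fun i => x i) G ≠ 0 := hG x hx
    have hG'x : eval (fun i => φ x i) G' ≠ 0 := hG' (φ x) hx'
    simp only [map_mul, map_pow]
    rw [(key x hx).1]
    exact mul_ne_zero (mul_ne_zero hG'x (pow_ne_zero _ hGx)) (pow_ne_zero _ hGx)
  · have hx' : φ x ∈ stdTorus := hmap hx
    have hGx : eval (fun i => x i) G ≠ 0 := hG x hx
    have hG'x : eval (fun i => φ x i) G' ≠ 0 := hG' (φ x) hx'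
    have hval : (ψ ∘ φ) x i = eval (fun i => φ x i) (F' i) / eval (fun i => φ x i) G' :=
      hF' (φ x) hx' i
    rw [hval]
    simp only [map_mul, map_pow, (key x hx).1, (key x hx).2 i]
    rw [div_eq_div_iff hG'x (mul_ne_zero (mul_ne_zero hG'x (pow_ne_zero _ hGx)) (pow_ne_zero _ hGx))]
    have hpow : (eval (fun i => x i) G) ^ (N (F' i)) * (eval (fun i => x i) G) ^ (D i + N G')
        = (eval (fun i => x i) G) ^ (N G') * (eval (fun i => x i) G) ^ S := by
      rw [← pow_add, ← pow_add]; congr 1; have := hD i; omega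
    linear_combination (-((eval fun i => φ x i) (F' i) * (eval fun i => φ x i) G')) * hpow

lemma hasRegularRep_id : HasRegularRep (fun x => x) :=
  ⟨fun i => X i, 1, fun _ _ => by simp, fun x _ i => by simp⟩

lemma isBirationalDiffeo_id : IsBirationalDiffeo (fun x => x) :=
  ⟨Set.bijOn_id stdTorus, hasRegularRep_id,
    ⟨fun x => x, ⟨fun x _ => rfl, fun x _ => rfl⟩, hasRegularRep_id⟩⟩

lemma IsBirationalDiffeo.inv_mapsTo {φ ψ : EuclideanSpace ℝ (Fin 4) → EuclideanSpace ℝ (Fin 4)}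
    (hφ : Set.BijOn φ stdTorus stdTorus) (hinv : Set.InvOn ψ φ stdTorus stdTorus) :
    Set.MapsTo ψ stdTorus stdTorus := by
  intro y hy
  obtain ⟨x, hx, rfl⟩ := hφ.surjOn hy
  rw [hinv.1 hx]; exact hx

lemma IsBirationalDiffeo.inv {φ : EuclideanSpace ℝ (Fin 4) → EuclideanSpace ℝ (Fin 4)}
    (hφ : IsBirationalDiffeo φ) :
    ∃ ψ, IsBirationalDiffeo ψ ∧ Set.InvOn ψ φ stdTorus stdTorus := by
  obtain ⟨hbij, hrep, ψ, hinv, hψrep⟩ := hφ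
  have hmapψ : Set.MapsTo ψ stdTorus stdTorus := IsBirationalDiffeo.inv_mapsTo hbij hinv
  have hbijψ : Set.BijOn ψ stdTorus stdTorus := hinv.symm.bijOn hmapψ hbij.mapsTo
  exact ⟨ψ, ⟨hbijψ, hψrep, φ, hinv.symm, hrep⟩, hinv⟩

lemma IsBirationalDiffeo.comp {φ ψ : EuclideanSpace ℝ (Fin 4) → EuclideanSpace ℝ (Fin 4)}
    (hψ : IsBirationalDiffeo ψ) (hφ : IsBirationalDiffeo φ) : IsBirationalDiffeo (ψ ∘ φ) := by
  obtain ⟨hφbij, hφrep, φ', hφinv, hφ'rep⟩ := hφ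
  obtain ⟨hψbij, hψrep, ψ', hψinv, hψ'rep⟩ := hψ
  refine ⟨hψbij.comp hφbij, HasRegularRep.comp hφbij.mapsTo hφrep hψrep,
    φ' ∘ ψ', ⟨fun x hx => ?_, fun y hy => ?_⟩,
    HasRegularRep.comp (IsBirationalDiffeo.inv_mapsTo hψbij hψinv) hψ'rep hφ'rep⟩
  · have h1 : φ x ∈ stdTorus := hφbij.mapsTo hx
    simp only [Function.comp_apply]
    rw [hψinv.1 h1, hφinv.1 hx]
  · have h1 : ψ' y ∈ stdTorus := IsBirationalDiffeo.inv_mapsTo hψbij hψinv hy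
    simp only [Function.comp_apply]
    rw [hφinv.2 h1, hψinv.2 hy]

noncomputable section

open Complex

/-- unit circle predicate via re/im. -/
def unitC (z : ℂ) : Prop := z.re ^ 2 + z.im ^ 2 = 1

lemma unitC_iff_normSq {z : ℂ} : unitC z ↔ Complex.normSq z = 1 := by
  simp [unitC, Complex.normSq_apply]; ring_nf

lemma unitC.mul {z w : ℂ} (hz : unitC z) (hw : unitC w) : unitC (z * w) := by
  rw [unitC_iff_normSq] at *
  rw [map_mul, hz, hw, mul_one]

lemma unitC.ne_zero {z : ℂ} (hz : unitC z) : z ≠ 0 := by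
  rw [unitC_iff_normSq] at hz
  intro h; rw [h] at hz; simp at hz

lemma unitC.inv {z : ℂ} (hz : unitC z) : unitC z⁻¹ := by
  rw [unitC_iff_normSq] at *
  rw [map_inv₀, hz]; norm_num

lemma unitC_one : unitC 1 := by simp [unitC]

lemma unitC_I : unitC Complex.I := by simp [unitC]

/-- rational parametrization of the circle minus `-1`. -/
def eC (t : ℝ) : ℂ := ⟨(1 - t ^ 2) / (1 + t ^ 2), 2 * t / (1 + t ^ 2)⟩

lemma one_add_sq_pos (t : ℝ) : (0:ℝ) < 1 + t ^ 2 := by positivity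

lemma eC_unit (t : ℝ) : unitC (eC t) := by
  have h := (one_add_sq_pos t).ne'
  simp only [unitC, eC]
  field_simp
  ring

lemma eC_injective : Function.Injective eC := by
  intro s t h
  have h1 := (one_add_sq_pos s).ne'
  have h2 := (one_add_sq_pos t).ne'
  have him : 2 * s / (1 + s ^ 2) = 2 * t / (1 + t ^ 2) := congrArg Complex.im h
  have hre : (1 - s ^ 2) / (1 + s ^ 2) = (1 - t ^ 2) / (1 + t ^ 2) := congrArg Complex.re h
  rw [div_eq_div_iff (by positivity) (by positivity)] at him hre
  nlinarith [sq_nonneg (s - t), sq_nonneg (s + t), sq_nonneg (s*t - 1), sq_nonneg (s*t + 1)]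

lemma eC_zero : eC 0 = 1 := by simp [eC, Complex.ext_iff]

lemma eC_one : eC 1 = Complex.I := by norm_num [eC, Complex.ext_iff]

lemma eC_surj {z : ℂ} (hz : unitC z) (hne : z ≠ -1) : ∃ t, eC t = z := by
  have hzz : z.re ^ 2 + z.im ^ 2 = 1 := hz
  have hre : z.re ≠ -1 := by
    intro h
    apply hne
    have him : z.im = 0 := by nlinarith
    rw [Complex.ext_iff]; simp [h, him]
  have hd : 1 + z.re ≠ 0 := fun h => hre (by linarith)
  refine ⟨z.im / (1 + z.re), ?_⟩
  have hz' : z.im ^ 2 = 1 - z.re ^ 2 := by linarith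
  have h1 : 1 + (z.im / (1 + z.re)) ^ 2 = 2 / (1 + z.re) := by
    rw [div_pow, hz']
    field_simp
    ring
  have h2 : 1 - (z.im / (1 + z.re)) ^ 2 = 2 * z.re / (1 + z.re) := by
    rw [div_pow, hz']
    field_simp
    ring
  have h2' : (0:ℝ) < 1 + (z.im / (1 + z.re)) ^ 2 := by positivity
  rw [Complex.ext_iff, eC]
  constructor
  · show (1 - (z.im / (1 + z.re)) ^ 2) / (1 + (z.im / (1 + z.re)) ^ 2) = z.re
    rw [h1, h2]
    rw [div_div_div_eq]
    field_simp
  · show 2 * (z.im / (1 + z.re)) / (1 + (z.im / (1 + z.re)) ^ 2) = z.im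
    rw [h1]
    field_simp


open MvPolynomial

/-- first-factor complex coordinate. -/
def Z1 (x : EuclideanSpace ℝ (Fin 4)) : ℂ := ⟨x 0, x 1⟩
/-- second-factor complex coordinate. -/
def Z2 (x : EuclideanSpace ℝ (Fin 4)) : ℂ := ⟨x 2, x 3⟩

lemma mem_stdTorus_iff {x : EuclideanSpace ℝ (Fin 4)} :
    x ∈ stdTorus ↔ unitC (Z1 x) ∧ unitC (Z2 x) := Iff.rfl

lemma ext_of_Z {x y : EuclideanSpace ℝ (Fin 4)} (h1 : Z1 x = Z1 y) (h2 : Z2 x = Z2 y) :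
    x = y := by
  rw [Complex.ext_iff] at h1 h2
  ext i
  fin_cases i
  · exact h1.1
  · exact h1.2
  · exact h2.1
  · exact h2.2

/-- invariance in the first two variables -/
def inv01 (u : MvPolynomial (Fin 4) ℝ) : Prop :=
  ∀ a b : Fin 4 → ℝ, a 0 = b 0 → a 1 = b 1 → eval a u = eval b u

def inv23 (u : MvPolynomial (Fin 4) ℝ) : Prop :=
  ∀ a b : Fin 4 → ℝ, a 2 = b 2 → a 3 = b 3 → eval a u = eval b u

lemma inv01_neg {u} (h : inv01 u) : inv01 (-u) := fun a b h0 h1 => by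
  simp [map_neg, h a b h0 h1]

lemma inv23_neg {u} (h : inv23 u) : inv23 (-u) := fun a b h0 h1 => by
  simp [map_neg, h a b h0 h1]

/-- twist of the second circle factor by the rotation `eC (u (x))`. -/
def twist2 (u : MvPolynomial (Fin 4) ℝ) (x : EuclideanSpace ℝ (Fin 4)) :
    EuclideanSpace ℝ (Fin 4) :=
  WithLp.toLp 2 ![x 0, x 1,
    ((1 - (eval (fun i => x i) u) ^ 2) * x 2 - 2 * (eval (fun i => x i) u) * x 3) /
      (1 + (eval (fun i => x i) u) ^ 2),
    (2 * (eval (fun i => x i) u) * x 2 + (1 - (eval (fun i => x i) u) ^ 2) * x 3) /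
      (1 + (eval (fun i => x i) u) ^ 2)]

/-- twist of the first circle factor. -/
def twist1 (u : MvPolynomial (Fin 4) ℝ) (x : EuclideanSpace ℝ (Fin 4)) :
    EuclideanSpace ℝ (Fin 4) :=
  WithLp.toLp 2 ![((1 - (eval (fun i => x i) u) ^ 2) * x 0 - 2 * (eval (fun i => x i) u) * x 1) /
      (1 + (eval (fun i => x i) u) ^ 2),
    (2 * (eval (fun i => x i) u) * x 0 + (1 - (eval (fun i => x i) u) ^ 2) * x 1) /
      (1 + (eval (fun i => x i) u) ^ 2),
    x 2, x 3]

lemma Z1_twist2 (u) (x) : Z1 (twist2 u x) = Z1 x := by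
  refine Complex.ext ?_ ?_ <;> rfl

lemma Z2_twist2 (u) (x) : Z2 (twist2 u x) = eC (eval (fun i => x i) u) * Z2 x := by
  set t := eval (fun i => x i) u with ht
  have h := (one_add_sq_pos t).ne'
  refine Complex.ext ?_ ?_
  · rw [Complex.mul_re]
    show ((1 - t ^ 2) * x 2 - 2 * t * x 3) / (1 + t ^ 2)
        = (1 - t ^ 2) / (1 + t ^ 2) * x 2 - 2 * t / (1 + t ^ 2) * x 3
    field_simp
  · rw [Complex.mul_im]
    show (2 * t * x 2 + (1 - t ^ 2) * x 3) / (1 + t ^ 2)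
        = (1 - t ^ 2) / (1 + t ^ 2) * x 3 + 2 * t / (1 + t ^ 2) * x 2
    field_simp
    ring

lemma Z2_twist1 (u) (x) : Z2 (twist1 u x) = Z2 x := by
  refine Complex.ext ?_ ?_ <;> rfl

lemma Z1_twist1 (u) (x) : Z1 (twist1 u x) = eC (eval (fun i => x i) u) * Z1 x := by
  set t := eval (fun i => x i) u with ht
  have h := (one_add_sq_pos t).ne'
  refine Complex.ext ?_ ?_
  · rw [Complex.mul_re]
    show ((1 - t ^ 2) * x 0 - 2 * t * x 1) / (1 + t ^ 2)
        = (1 - t ^ 2) / (1 + t ^ 2) * x 0 - 2 * t / (1 + t ^ 2) * x 1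
    field_simp
  · rw [Complex.mul_im]
    show (2 * t * x 0 + (1 - t ^ 2) * x 1) / (1 + t ^ 2)
        = (1 - t ^ 2) / (1 + t ^ 2) * x 1 + 2 * t / (1 + t ^ 2) * x 0
    field_simp
    ring

lemma twist2_mapsTo (u) : Set.MapsTo (twist2 u) stdTorus stdTorus := by
  intro x hx
  rw [mem_stdTorus_iff] at hx ⊢
  rw [Z1_twist2, Z2_twist2]
  exact ⟨hx.1, (eC_unit _).mul hx.2⟩

lemma twist1_mapsTo (u) : Set.MapsTo (twist1 u) stdTorus stdTorus := by
  intro x hx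
  rw [mem_stdTorus_iff] at hx ⊢
  rw [Z2_twist1, Z1_twist1]
  exact ⟨(eC_unit _).mul hx.1, hx.2⟩

lemma eC_neg_mul (t : ℝ) : eC (-t) * eC t = 1 := by
  have h := (one_add_sq_pos t).ne'
  rw [Complex.ext_iff, eC, eC, Complex.mul_re, Complex.mul_im]
  constructor
  · show (_ : ℝ) = 1
    field_simp
    ring
  · show (_ : ℝ) = 0
    field_simp
    ring

lemma twist2_left_inv {u} (h : inv01 u) (x : EuclideanSpace ℝ (Fin 4)) :
    twist2 (-u) (twist2 u x) = x := by
  have hval : eval (fun i => twist2 u x i) u = eval (fun i => x i) u := by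
    apply h
    · show twist2 u x 0 = x 0; rfl
    · show twist2 u x 1 = x 1; rfl
  apply ext_of_Z
  · rw [Z1_twist2, Z1_twist2]
  · rw [Z2_twist2, Z2_twist2, map_neg, hval, ← mul_assoc, eC_neg_mul, one_mul]

lemma twist1_left_inv {u} (h : inv23 u) (x : EuclideanSpace ℝ (Fin 4)) :
    twist1 (-u) (twist1 u x) = x := by
  have hval : eval (fun i => twist1 u x i) u = eval (fun i => x i) u := by
    apply h
    · show twist1 u x 2 = x 2; rfl
    · show twist1 u x 3 = x 3; rfl
  apply ext_of_Z
  · rw [Z1_twist1, Z1_twist1, map_neg, hval, ← mul_assoc, eC_neg_mul, one_mul]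
  · rw [Z2_twist1, Z2_twist1]

lemma twist2_rep (u) : HasRegularRep (twist2 u) := by
  refine ⟨![X 0 * (1 + u ^ 2), X 1 * (1 + u ^ 2),
      (1 - u ^ 2) * X 2 - (C 2 * u) * X 3,
      (C 2 * u) * X 2 + (1 - u ^ 2) * X 3], 1 + u ^ 2, fun x _ => ?_, fun x _ i => ?_⟩
  · simp only [map_add, map_one, map_pow]
    positivity
  · have h := (one_add_sq_pos (eval (fun i => x i) u)).ne'
    fin_cases i <;>
      simp only [twist2, Matrix.cons_val_zero, Matrix.cons_val_one, Matrix.head_cons,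
        Matrix.cons_val_two, Matrix.tail_cons, Matrix.cons_val_three, map_add, map_mul,
        map_sub, map_one, map_pow, eval_X, eval_C, Fin.isValue, PiLp.toLp_apply, Fin.reduceFinMk, Matrix.cons_val] <;>
      field_simp <;> ring

lemma twist1_rep (u) : HasRegularRep (twist1 u) := by
  refine ⟨![(1 - u ^ 2) * X 0 - (C 2 * u) * X 1,
      (C 2 * u) * X 0 + (1 - u ^ 2) * X 1,
      X 2 * (1 + u ^ 2), X 3 * (1 + u ^ 2)], 1 + u ^ 2, fun x _ => ?_, fun x _ i => ?_⟩
  · simp only [map_add, map_one, map_pow]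
    positivity
  · have h := (one_add_sq_pos (eval (fun i => x i) u)).ne'
    fin_cases i <;>
      simp only [twist1, Matrix.cons_val_zero, Matrix.cons_val_one, Matrix.head_cons,
        Matrix.cons_val_two, Matrix.tail_cons, Matrix.cons_val_three, map_add, map_mul,
        map_sub, map_one, map_pow, eval_X, eval_C, Fin.isValue, PiLp.toLp_apply, Fin.reduceFinMk, Matrix.cons_val] <;>
      field_simp <;> ring

lemma twist2_isBD {u} (h : inv01 u) : IsBirationalDiffeo (twist2 u) := by
  have hinv : Set.InvOn (twist2 (-u)) (twist2 u) stdTorus stdTorus := by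
    constructor
    · intro x _; exact twist2_left_inv h x
    · intro x _
      have := twist2_left_inv (inv01_neg h) x
      rwa [neg_neg] at this
  exact ⟨hinv.bijOn (twist2_mapsTo u) (twist2_mapsTo (-u)), twist2_rep u,
    twist2 (-u), hinv, twist2_rep (-u)⟩

lemma twist1_isBD {u} (h : inv23 u) : IsBirationalDiffeo (twist1 u) := by
  have hinv : Set.InvOn (twist1 (-u)) (twist1 u) stdTorus stdTorus := by
    constructor
    · intro x _; exact twist1_left_inv h x
    · intro x _
      have := twist1_left_inv (inv23_neg h) x
      rwa [neg_neg] at this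
  exact ⟨hinv.bijOn (twist1_mapsTo u) (twist1_mapsTo (-u)), twist1_rep u,
    twist1 (-u), hinv, twist1_rep (-u)⟩


@[simp] lemma Z1_re (x : EuclideanSpace ℝ (Fin 4)) : (Z1 x).re = x 0 := rfl
@[simp] lemma Z1_im (x : EuclideanSpace ℝ (Fin 4)) : (Z1 x).im = x 1 := rfl
@[simp] lemma Z2_re (x : EuclideanSpace ℝ (Fin 4)) : (Z2 x).re = x 2 := rfl
@[simp] lemma Z2_im (x : EuclideanSpace ℝ (Fin 4)) : (Z2 x).im = x 3 := rfl

lemma dot_ne_zero' {z w : ℂ} (hz : unitC z) (hw : unitC w) (hne : w ≠ z) :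
    w.re * z.re + w.im * z.im - 1 ≠ 0 := by
  intro h
  apply hne
  have hz' : z.re ^ 2 + z.im ^ 2 = 1 := hz
  have hw' : w.re ^ 2 + w.im ^ 2 = 1 := hw
  rw [Complex.ext_iff]
  constructor <;> nlinarith [sq_nonneg (z.re - w.re), sq_nonneg (z.im - w.im)]

/-- Lagrange-style interpolation polynomial in the first two coordinates. -/
def interpPoly1 (s : Finset ℂ) (v : ℂ → ℝ) : MvPolynomial (Fin 4) ℝ :=
  ∑ z ∈ s, C (v z) *
    ∏ w ∈ s.erase z,
      ((C w.re * X 0 + C w.im * X 1 - 1) * C ((w.re * z.re + w.im * z.im - 1)⁻¹))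

def interpPoly2 (s : Finset ℂ) (v : ℂ → ℝ) : MvPolynomial (Fin 4) ℝ :=
  ∑ z ∈ s, C (v z) *
    ∏ w ∈ s.erase z,
      ((C w.re * X 2 + C w.im * X 3 - 1) * C ((w.re * z.re + w.im * z.im - 1)⁻¹))

lemma eval_interpPoly1 (s : Finset ℂ) (v : ℂ → ℝ) (a : Fin 4 → ℝ) :
    eval a (interpPoly1 s v) =
      ∑ z ∈ s, v z * ∏ w ∈ s.erase z,
        ((w.re * a 0 + w.im * a 1 - 1) * (w.re * z.re + w.im * z.im - 1)⁻¹) := by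
  simp [interpPoly1]

lemma eval_interpPoly2 (s : Finset ℂ) (v : ℂ → ℝ) (a : Fin 4 → ℝ) :
    eval a (interpPoly2 s v) =
      ∑ z ∈ s, v z * ∏ w ∈ s.erase z,
        ((w.re * a 2 + w.im * a 3 - 1) * (w.re * z.re + w.im * z.im - 1)⁻¹) := by
  simp [interpPoly2]

lemma interpPoly1_inv01 (s : Finset ℂ) (v : ℂ → ℝ) : inv01 (interpPoly1 s v) := by
  intro a b h0 h1
  rw [eval_interpPoly1, eval_interpPoly1, h0, h1]

lemma interpPoly2_inv23 (s : Finset ℂ) (v : ℂ → ℝ) : inv23 (interpPoly2 s v) := by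
  intro a b h2 h3
  rw [eval_interpPoly2, eval_interpPoly2, h2, h3]

lemma interpPoly1_value (s : Finset ℂ) (hs : ∀ z ∈ s, unitC z) (v : ℂ → ℝ)
    (x : EuclideanSpace ℝ (Fin 4)) (hx : x ∈ stdTorus) (hmem : Z1 x ∈ s) :
    eval (fun i => x i) (interpPoly1 s v) = v (Z1 x) := by
  rw [eval_interpPoly1]
  rw [Finset.sum_eq_single (Z1 x)]
  · rw [Finset.prod_eq_one, mul_one]
    intro w hw
    rw [Finset.mem_erase] at hw
    have hfac : w.re * x 0 + w.im * x 1 - 1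
        = w.re * (Z1 x).re + w.im * (Z1 x).im - 1 := by simp
    rw [hfac]
    exact mul_inv_cancel₀ (dot_ne_zero' (hx.1) (hs w hw.2) hw.1)
  · intro z hz hne
    have hZmem : Z1 x ∈ s.erase z := Finset.mem_erase.2 ⟨Ne.symm hne, hmem⟩
    rw [Finset.prod_eq_zero hZmem, mul_zero]
    have : (Z1 x).re * x 0 + (Z1 x).im * x 1 - 1 = 0 := by
      have h1 : x 0 ^ 2 + x 1 ^ 2 = 1 := hx.1
      simp only [Z1_re, Z1_im]
      nlinarith
    rw [this, zero_mul]
  · intro h; exact absurd hmem h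

lemma interpPoly2_value (s : Finset ℂ) (hs : ∀ z ∈ s, unitC z) (v : ℂ → ℝ)
    (x : EuclideanSpace ℝ (Fin 4)) (hx : x ∈ stdTorus) (hmem : Z2 x ∈ s) :
    eval (fun i => x i) (interpPoly2 s v) = v (Z2 x) := by
  rw [eval_interpPoly2]
  rw [Finset.sum_eq_single (Z2 x)]
  · rw [Finset.prod_eq_one, mul_one]
    intro w hw
    rw [Finset.mem_erase] at hw
    have hfac : w.re * x 2 + w.im * x 3 - 1
        = w.re * (Z2 x).re + w.im * (Z2 x).im - 1 := by simp
    rw [hfac]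
    exact mul_inv_cancel₀ (dot_ne_zero' (hx.2) (hs w hw.2) hw.1)
  · intro z hz hne
    have hZmem : Z2 x ∈ s.erase z := Finset.mem_erase.2 ⟨Ne.symm hne, hmem⟩
    rw [Finset.prod_eq_zero hZmem, mul_zero]
    have : (Z2 x).re * x 2 + (Z2 x).im * x 3 - 1 = 0 := by
      have h1 : x 2 ^ 2 + x 3 ^ 2 = 1 := hx.2
      simp only [Z2_re, Z2_im]
      nlinarith
    rw [this, zero_mul]
  · intro h; exact absurd hmem h

lemma unit_decomp {r : ℂ} (hr : unitC r) : ∃ t t' : ℝ, eC t * eC t' = r := by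
  by_cases h : r = -1
  · refine ⟨1, 1, ?_⟩
    rw [eC_one, Complex.I_mul_I, h]
  · obtain ⟨t, ht⟩ := eC_surj hr h
    exact ⟨t, 0, by rw [eC_zero, mul_one, ht]⟩

/-- The basic move: rotate the second factor pointwise by a unit depending
only on the first coordinate. -/
lemma move2 {m : ℕ} (x : Fin m → EuclideanSpace ℝ (Fin 4)) (hx : ∀ j, x j ∈ stdTorus)
    (ρ : ℂ → ℂ) (hρ : ∀ j, unitC (ρ (Z1 (x j)))) :
    ∃ φ, IsBirationalDiffeo φ ∧
      ∀ j, Z1 (φ (x j)) = Z1 (x j) ∧ Z2 (φ (x j)) = ρ (Z1 (x j)) * Z2 (x j) := by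
  have hchoice : ∀ z : ℂ, ∃ p : ℝ × ℝ, unitC (ρ z) → eC p.1 * eC p.2 = ρ z := by
    intro z
    by_cases h : unitC (ρ z)
    · obtain ⟨t, t', htt⟩ := unit_decomp h
      exact ⟨(t, t'), fun _ => htt⟩
    · exact ⟨(0, 0), fun h' => absurd h' h⟩
  choose d hd using hchoice
  set s : Finset ℂ := Finset.image (fun j => Z1 (x j)) Finset.univ with hsdef
  have hs : ∀ z ∈ s, unitC z := by
    intro z hz
    rw [hsdef, Finset.mem_image] at hz
    obtain ⟨j, -, rfl⟩ := hz
    exact (hx j).1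
  set u := interpPoly1 s (fun z => (d z).1) with hu
  set u' := interpPoly1 s (fun z => (d z).2) with hu'
  refine ⟨twist2 u' ∘ twist2 u,
    (twist2_isBD (interpPoly1_inv01 s _)).comp (twist2_isBD (interpPoly1_inv01 s _)), fun j => ?_⟩
  have hmem : Z1 (x j) ∈ s := by
    rw [hsdef, Finset.mem_image]
    exact ⟨j, Finset.mem_univ j, rfl⟩
  have hy : twist2 u (x j) ∈ stdTorus := twist2_mapsTo u (hx j)
  have hZ1y : Z1 (twist2 u (x j)) = Z1 (x j) := Z1_twist2 u (x j)
  have hevu : eval (fun i => (x j) i) u = (d (Z1 (x j))).1 :=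
    interpPoly1_value s hs _ (x j) (hx j) hmem
  have hevu' : eval (fun i => (twist2 u (x j)) i) u' = (d (Z1 (x j))).2 := by
    have := interpPoly1_value s hs (fun z => (d z).2) (twist2 u (x j)) hy (by rw [hZ1y]; exact hmem)
    rwa [hZ1y] at this
  constructor
  · show Z1 (twist2 u' (twist2 u (x j))) = Z1 (x j)
    rw [Z1_twist2, hZ1y]
  · show Z2 (twist2 u' (twist2 u (x j))) = _
    rw [Z2_twist2, Z2_twist2, hevu, hevu', ← mul_assoc, mul_comm (eC (d (Z1 (x j))).2),
      hd (Z1 (x j)) (hρ j)]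

/-- The basic move: rotate the first factor pointwise by a unit depending
only on the second coordinate. -/
lemma move1 {m : ℕ} (x : Fin m → EuclideanSpace ℝ (Fin 4)) (hx : ∀ j, x j ∈ stdTorus)
    (ρ : ℂ → ℂ) (hρ : ∀ j, unitC (ρ (Z2 (x j)))) :
    ∃ φ, IsBirationalDiffeo φ ∧
      ∀ j, Z2 (φ (x j)) = Z2 (x j) ∧ Z1 (φ (x j)) = ρ (Z2 (x j)) * Z1 (x j) := by
  have hchoice : ∀ z : ℂ, ∃ p : ℝ × ℝ, unitC (ρ z) → eC p.1 * eC p.2 = ρ z := by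
    intro z
    by_cases h : unitC (ρ z)
    · obtain ⟨t, t', htt⟩ := unit_decomp h
      exact ⟨(t, t'), fun _ => htt⟩
    · exact ⟨(0, 0), fun h' => absurd h' h⟩
  choose d hd using hchoice
  set s : Finset ℂ := Finset.image (fun j => Z2 (x j)) Finset.univ with hsdef
  have hs : ∀ z ∈ s, unitC z := by
    intro z hz
    rw [hsdef, Finset.mem_image] at hz
    obtain ⟨j, -, rfl⟩ := hz
    exact (hx j).2
  set u := interpPoly2 s (fun z => (d z).1) with hu
  set u' := interpPoly2 s (fun z => (d z).2) with hu'
  refine ⟨twist1 u' ∘ twist1 u,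
    (twist1_isBD (interpPoly2_inv23 s _)).comp (twist1_isBD (interpPoly2_inv23 s _)), fun j => ?_⟩
  have hmem : Z2 (x j) ∈ s := by
    rw [hsdef, Finset.mem_image]
    exact ⟨j, Finset.mem_univ j, rfl⟩
  have hy : twist1 u (x j) ∈ stdTorus := twist1_mapsTo u (hx j)
  have hZ2y : Z2 (twist1 u (x j)) = Z2 (x j) := Z2_twist1 u (x j)
  have hevu : eval (fun i => (x j) i) u = (d (Z2 (x j))).1 :=
    interpPoly2_value s hs _ (x j) (hx j) hmem
  have hevu' : eval (fun i => (twist1 u (x j)) i) u' = (d (Z2 (x j))).2 := by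
    have := interpPoly2_value s hs (fun z => (d z).2) (twist1 u (x j)) hy (by rw [hZ2y]; exact hmem)
    rwa [hZ2y] at this
  constructor
  · show Z2 (twist1 u' (twist1 u (x j))) = Z2 (x j)
    rw [Z2_twist1, hZ2y]
  · show Z1 (twist1 u' (twist1 u (x j))) = _
    rw [Z1_twist1, Z1_twist1, hevu, hevu', ← mul_assoc, mul_comm (eC (d (Z2 (x j))).2),
      hd (Z2 (x j)) (hρ j)]


/-- normal-form points on the torus. -/
def En (k : ℕ) : EuclideanSpace ℝ (Fin 4) := WithLp.toLp 2 ![1, 0, (eC k).re, (eC k).im]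

lemma Z1_En (k : ℕ) : Z1 (En k) = 1 := by
  refine Complex.ext ?_ ?_ <;> rfl

lemma Z2_En (k : ℕ) : Z2 (En k) = eC k := by
  refine Complex.ext ?_ ?_ <;> rfl

lemma En_mem (k : ℕ) : En k ∈ stdTorus := by
  rw [mem_stdTorus_iff, Z1_En, Z2_En]
  exact ⟨unitC_one, eC_unit _⟩

lemma eC_nat_ne {k n : ℕ} (h : k ≠ n) : eC (k : ℝ) ≠ eC (n : ℝ) := fun hh =>
  h (Nat.cast_injective (eC_injective hh))

lemma I_ne_one : Complex.I ≠ 1 := by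
  intro h
  have := congrArg Complex.im h
  simp at this

lemma fixStep (n : ℕ) (R : EuclideanSpace ℝ (Fin 4)) (hR : R ∈ stdTorus)
    (hRne : ∀ k, k < n → R ≠ En k) :
    ∃ φ, IsBirationalDiffeo φ ∧ (∀ k, k < n → φ (En k) = En k) ∧ φ R = En n := by
  -- Stage α : make the first coordinate of the moving point different from 1
  obtain ⟨φa, hφaBD, hfixa, hRa1, hRa2⟩ :
      ∃ φa, IsBirationalDiffeo φa ∧ (∀ k, k < n → φa (En k) = En k) ∧
        Z1 (φa R) ≠ 1 ∧ φa R ∈ stdTorus := by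
    by_cases hr : Z1 R = 1
    · have hsne : ∀ k, k < n → Z2 R ≠ eC (k : ℝ) := by
        intro k hk h
        exact hRne k hk (ext_of_Z (by rw [hr, Z1_En]) (by rw [h, Z2_En]))
      set x : Fin (n + 1) → EuclideanSpace ℝ (Fin 4) :=
        fun j => if j.val < n then En j.val else R with hxdef
      have hxT : ∀ j, x j ∈ stdTorus := by
        intro j; rw [hxdef]; dsimp only
        split
        · exact En_mem _
        · exact hR
      have hρ : ∀ j, unitC ((fun w => if w = Z2 R then Complex.I else 1) (Z2 (x j))) := by
        intro j; dsimp only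
        split
        · exact unitC_I
        · exact unitC_one
      obtain ⟨φa, hBD, hval⟩ := move1 x hxT (fun w => if w = Z2 R then Complex.I else 1) hρ
      have hxlast : x (Fin.last n) = R := by rw [hxdef]; simp
      refine ⟨φa, hBD, ?_, ?_, hBD.1.mapsTo hR⟩
      · intro k hk
        have hj : x ⟨k, Nat.lt_succ_of_lt hk⟩ = En k := by rw [hxdef]; simp [hk]
        have := hval ⟨k, Nat.lt_succ_of_lt hk⟩
        rw [hj] at this
        obtain ⟨h2, h1⟩ := this
        rw [Z2_En] at h2 h1
        rw [if_neg (Ne.symm (hsne k hk))] at h1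
        rw [one_mul] at h1
        exact ext_of_Z h1 h2
      · have := hval (Fin.last n)
        rw [hxlast] at this
        obtain ⟨h2, h1⟩ := this
        rw [if_pos rfl, hr, mul_one] at h1
        rw [h1]
        exact I_ne_one
    · exact ⟨fun y => y, isBirationalDiffeo_id, fun _ _ => rfl, hr, hR⟩
  set R₁ := φa R with hR₁def
  -- Stage β : rotate the second coordinate of the moving point to eC n
  obtain ⟨φb, hφbBD, hfixb, hRb⟩ :
      ∃ φb, IsBirationalDiffeo φb ∧ (∀ k, k < n → φb (En k) = En k) ∧
        (Z1 (φb R₁) = Z1 R₁ ∧ Z2 (φb R₁) = eC n) := by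
    set x : Fin (n + 1) → EuclideanSpace ℝ (Fin 4) :=
      fun j => if j.val < n then En j.val else R₁ with hxdef
    have hxT : ∀ j, x j ∈ stdTorus := by
      intro j; rw [hxdef]; dsimp only
      split
      · exact En_mem _
      · exact hRa2
    set ρ : ℂ → ℂ := fun z => if z = 1 then 1 else eC n * (Z2 R₁)⁻¹ with hρdef
    have hρ : ∀ j, unitC (ρ (Z1 (x j))) := by
      intro j; rw [hρdef]; dsimp only
      split
      · exact unitC_one
      · exact (eC_unit _).mul (((mem_stdTorus_iff.1 hRa2).2).inv)
    obtain ⟨φb, hBD, hval⟩ := move2 x hxT ρ hρ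
    have hxlast : x (Fin.last n) = R₁ := by rw [hxdef]; simp
    refine ⟨φb, hBD, ?_, ?_⟩
    · intro k hk
      have hj : x ⟨k, Nat.lt_succ_of_lt hk⟩ = En k := by rw [hxdef]; simp [hk]
      have := hval ⟨k, Nat.lt_succ_of_lt hk⟩
      rw [hj] at this
      obtain ⟨h1, h2⟩ := this
      rw [Z1_En] at h1 h2
      rw [hρdef] at h2; dsimp only at h2
      rw [if_pos rfl, one_mul] at h2
      exact ext_of_Z h1 h2
    · have := hval (Fin.last n)
      rw [hxlast] at this
      obtain ⟨h1, h2⟩ := this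
      rw [hρdef] at h2; dsimp only at h2
      rw [if_neg hRa1] at h2
      rw [mul_assoc, inv_mul_cancel₀ (((mem_stdTorus_iff.1 hRa2).2).ne_zero), mul_one] at h2
      exact ⟨h1, h2⟩
  set R₂ := φb R₁ with hR₂def
  have hR₂T : R₂ ∈ stdTorus := hφbBD.1.mapsTo hRa2
  have hR₂Z2 : Z2 R₂ = eC n := hRb.2
  -- Stage δ : rotate the first coordinate of the moving point to 1
  obtain ⟨φd, hφdBD, hfixd, hRd⟩ :
      ∃ φd, IsBirationalDiffeo φd ∧ (∀ k, k < n → φd (En k) = En k) ∧ φd R₂ = En n := by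
    set x : Fin (n + 1) → EuclideanSpace ℝ (Fin 4) :=
      fun j => if j.val < n then En j.val else R₂ with hxdef
    have hxT : ∀ j, x j ∈ stdTorus := by
      intro j; rw [hxdef]; dsimp only
      split
      · exact En_mem _
      · exact hR₂T
    set ρ : ℂ → ℂ := fun w => if w = eC n then (Z1 R₂)⁻¹ else 1 with hρdef
    have hρ : ∀ j, unitC (ρ (Z2 (x j))) := by
      intro j; rw [hρdef]; dsimp only
      split
      · exact ((mem_stdTorus_iff.1 hR₂T).1).inv
      · exact unitC_one
    obtain ⟨φd, hBD, hval⟩ := move1 x hxT ρ hρ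
    have hxlast : x (Fin.last n) = R₂ := by rw [hxdef]; simp
    refine ⟨φd, hBD, ?_, ?_⟩
    · intro k hk
      have hj : x ⟨k, Nat.lt_succ_of_lt hk⟩ = En k := by rw [hxdef]; simp [hk]
      have := hval ⟨k, Nat.lt_succ_of_lt hk⟩
      rw [hj] at this
      obtain ⟨h2, h1⟩ := this
      rw [Z2_En] at h2 h1
      rw [hρdef] at h1; dsimp only at h1
      rw [if_neg (eC_nat_ne (Nat.ne_of_lt hk)), one_mul] at h1
      exact ext_of_Z h1 h2
    · have := hval (Fin.last n)
      rw [hxlast] at this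
      obtain ⟨h2, h1⟩ := this
      rw [hR₂Z2] at h2 h1
      rw [hρdef] at h1; dsimp only at h1
      rw [if_pos rfl, inv_mul_cancel₀ (((mem_stdTorus_iff.1 hR₂T).1).ne_zero)] at h1
      exact ext_of_Z (by rw [h1, Z1_En]) (by rw [h2, Z2_En])
  refine ⟨φd ∘ φb ∘ φa, (hφdBD.comp (hφbBD.comp hφaBD)), fun k hk => ?_, ?_⟩
  · show φd (φb (φa (En k))) = En k
    rw [hfixa k hk, hfixb k hk, hfixd k hk]
  · show φd (φb (φa R)) = En n
    exact hRd

lemma toNormal (n : ℕ) (P : Fin n → EuclideanSpace ℝ (Fin 4))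
    (hP : ∀ j, P j ∈ stdTorus) (hinj : Function.Injective P) :
    ∃ φ, IsBirationalDiffeo φ ∧ ∀ j, φ (P j) = En j.val := by
  induction n with
  | zero => exact ⟨fun y => y, isBirationalDiffeo_id, fun j => j.elim0⟩
  | succ n ih =>
    obtain ⟨φ₀, hφ₀, hval⟩ := ih (fun j => P j.castSucc) (fun j => hP _)
      (fun j k h => Fin.castSucc_injective n (hinj h))
    set R := φ₀ (P (Fin.last n)) with hRdef
    have hR : R ∈ stdTorus := hφ₀.1.mapsTo (hP _)
    have hRne : ∀ k, k < n → R ≠ En k := by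
      intro k hk h
      have h2 := hval ⟨k, hk⟩
      have : φ₀ (P (Fin.last n)) = φ₀ (P (Fin.castSucc ⟨k, hk⟩)) := by
        rw [← hRdef, h, ← h2]
      have heq := hφ₀.1.injOn (hP _) (hP _) this
      have := hinj heq
      exact absurd this.symm (Fin.ne_last_of_lt (Fin.castSucc_lt_last ⟨k, hk⟩))
    obtain ⟨φ₁, hφ₁, hfix, hlast⟩ := fixStep n R hR hRne
    refine ⟨φ₁ ∘ φ₀, hφ₁.comp hφ₀, fun j => ?_⟩
    induction j using Fin.lastCases with
    | last =>
      show φ₁ (φ₀ (P (Fin.last n))) = En (Fin.last n).val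
      rw [← hRdef, hlast]
      rfl
    | cast j =>
      show φ₁ (φ₀ (P j.castSucc)) = En (Fin.castSucc j).val
      rw [hval j]
      exact hfix j.val j.isLt

/-- the group of birational diffeomorphisms of the standard torus
`T = S¹ × S¹ ⊂ ℝ⁴` acts infinitely transitively: any `n`-tuple of pairwise distinct
points of `T` is mapped to any other such `n`-tuple by a birational diffeomorphism. -/
theorem stmt8 (n : ℕ) (hn : 0 < n) (P Q : Fin n → EuclideanSpace ℝ (Fin 4))
    (hP : ∀ j, P j ∈ stdTorus) (hQ : ∀ j, Q j ∈ stdTorus)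
    (hPinj : Function.Injective P) (hQinj : Function.Injective Q) :
    ∃ φ, IsBirationalDiffeo φ ∧ ∀ j, φ (P j) = Q j := by
  obtain ⟨gP, hgP, hgPval⟩ := toNormal n P hP hPinj
  obtain ⟨gQ, hgQ, hgQval⟩ := toNormal n Q hQ hQinj
  obtain ⟨ψ, hψ, hψinv⟩ := hgQ.inv
  refine ⟨ψ ∘ gP, hψ.comp hgP, fun j => ?_⟩
  show ψ (gP (P j)) = Q j
  rw [hgPval j, ← hgQval j]
  exact hψinv.1 (hQ j)

end
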